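/- Let $d_1, d_2, d_3 > 0$ and $\Delta > 0$. Consider coefficients constant equal to $\boldsymbol{\beta}_a$ on the first $d_1$ indices and $\boldsymbol{\beta}_b$ on the remaining indices, with $\|\boldsymbol{\beta}_b-\boldsymbol{\beta}_a\|_\Sigma^2 = \Delta^2$. Let $V(m)$ denote the within-variation $\sum_{i=1}^{m}\|\boldsymbol{\beta}_i - \bar{\boldsymbol{\beta}}_{1:m}\|_\Sigma^2$ of the first $m$ indices. Then $V(d_1+d_2+d_3) - V(d_1+d_2) = \frac{d_1^2 d_3 \Delta^2}{(d_1+d_2)(d_1+d_2+d_3)}$, and in particular this difference is nonnegative. -/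

import Mathlib

open Matrix Finset

/-- Key variation-gap computation: for coefficients equal to `βₐ` on the first `d₁` indices and
`β_b` afterwards, the within-variation `V(m)` of the first `m` indices satisfies
`V(d₁+d₂+d₃) - V(d₁+d₂) = d₁²d₃Δ²/((d₁+d₂)(d₁+d₂+d₃)) ≥ 0`. -/
theorem variation_gap {p : ℕ}
    (S : Matrix (Fin p) (Fin p) ℝ) (hS : S.PosSemidef)
    (d1 d2 d3 : ℕ) (hd1 : 0 < d1) (hd2 : 0 < d2) (hd3 : 0 < d3)
    (βa βb : Fin p → ℝ) (Δ : ℝ) (hΔ : 0 < Δ)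
    (hdiff : (βb - βa) ⬝ᵥ S *ᵥ (βb - βa) = Δ ^ 2)
    (β : ℕ → Fin p → ℝ) (hβ : ∀ i, β i = if i < d1 then βa else βb)
    (V : ℕ → ℝ)
    (hV : ∀ m, V m = ∑ i ∈ Finset.range m,
      (β i - (m : ℝ)⁻¹ • ∑ j ∈ Finset.range m, β j) ⬝ᵥ S *ᵥ
      (β i - (m : ℝ)⁻¹ • ∑ j ∈ Finset.range m, β j)) :
    V (d1 + d2 + d3) - V (d1 + d2) =
      (d1 : ℝ) ^ 2 * d3 * Δ ^ 2 / (((d1 : ℝ) + d2) * ((d1 : ℝ) + d2 + d3)) ∧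
    0 ≤ V (d1 + d2 + d3) - V (d1 + d2) := by
  have qsmul : ∀ (c : ℝ) (v : Fin p → ℝ),
      (c • v) ⬝ᵥ S *ᵥ (c • v) = c ^ 2 * (v ⬝ᵥ S *ᵥ v) := by
    intro c v
    rw [smul_dotProduct, Matrix.mulVec_smul, dotProduct_smul, smul_eq_mul, smul_eq_mul]
    ring
  have hdiff' : (βa - βb) ⬝ᵥ S *ᵥ (βa - βb) = Δ ^ 2 := by
    have : βa - βb = (-1 : ℝ) • (βb - βa) := by funext x; simp
    rw [this, qsmul]
    simp [hdiff]
  have key : ∀ k : ℕ, V (d1 + k) = (d1 : ℝ) * k / ((d1 : ℝ) + k) * Δ ^ 2 := by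
    intro k
    have hm : (0 : ℝ) < (d1 : ℝ) + k := by positivity
    have hmne : ((d1 : ℝ) + k) ≠ 0 := ne_of_gt hm
    have hcast : ((d1 + k : ℕ) : ℝ) = (d1 : ℝ) + k := by push_cast; ring
    have hfilt : (Finset.range (d1 + k)).filter (fun j => j < d1) = Finset.range d1 := by
      ext j; simp; omega
    have hfilt2 : (Finset.range (d1 + k)).filter (fun j => ¬ j < d1) =
        Finset.Ico d1 (d1 + k) := by
      ext j; simp; omega
    have hsum : ∑ j ∈ Finset.range (d1 + k), β j = (d1 : ℝ) • βa + (k : ℝ) • βb := by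
      simp only [hβ]
      rw [Finset.sum_ite, hfilt, hfilt2, Finset.sum_const, Finset.sum_const,
        Finset.card_range, Nat.card_Ico]
      simp [← Nat.cast_smul_eq_nsmul ℝ]
    have hmean1 : βa - ((d1 + k : ℕ) : ℝ)⁻¹ • ((d1 : ℝ) • βa + (k : ℝ) • βb)
        = ((k : ℝ) / ((d1 : ℝ) + k)) • (βa - βb) := by
      funext x
      simp only [Pi.sub_apply, Pi.smul_apply, Pi.add_apply, smul_eq_mul, hcast]
      field_simp
      ring
    have hmean2 : βb - ((d1 + k : ℕ) : ℝ)⁻¹ • ((d1 : ℝ) • βa + (k : ℝ) • βb)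
        = ((d1 : ℝ) / ((d1 : ℝ) + k)) • (βb - βa) := by
      funext x
      simp only [Pi.sub_apply, Pi.smul_apply, Pi.add_apply, smul_eq_mul, hcast]
      field_simp
      ring
    rw [hV, hsum]
    have hterm : ∀ i ∈ Finset.range (d1 + k),
        (β i - ((d1 + k : ℕ) : ℝ)⁻¹ • ((d1 : ℝ) • βa + (k : ℝ) • βb)) ⬝ᵥ S *ᵥ
        (β i - ((d1 + k : ℕ) : ℝ)⁻¹ • ((d1 : ℝ) • βa + (k : ℝ) • βb)) =
        if i < d1 then ((k : ℝ) / ((d1 : ℝ) + k)) ^ 2 * Δ ^ 2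
        else ((d1 : ℝ) / ((d1 : ℝ) + k)) ^ 2 * Δ ^ 2 := by
      intro i _
      rw [hβ i]
      by_cases h : i < d1
      · simp only [h, if_true]
        rw [hmean1, qsmul, hdiff']
      · simp only [h, if_false]
        rw [hmean2, qsmul, hdiff]
    rw [Finset.sum_congr rfl hterm, Finset.sum_ite, hfilt, hfilt2, Finset.sum_const,
      Finset.sum_const, Finset.card_range, Nat.card_Ico]
    simp only [nsmul_eq_mul]
    have hkcast : ((d1 + k - d1 : ℕ) : ℝ) = (k : ℝ) := by
      congr 1; omega
    rw [hkcast]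
    field_simp
    ring
  have h1 : V (d1 + d2 + d3) = (d1 : ℝ) * ((d2 : ℝ) + d3) / ((d1 : ℝ) + ((d2 : ℝ) + d3)) * Δ ^ 2 := by
    rw [Nat.add_assoc, key (d2 + d3)]
    push_cast
    ring_nf
  have h2 : V (d1 + d2) = (d1 : ℝ) * d2 / ((d1 : ℝ) + d2) * Δ ^ 2 := key d2
  have hp1 : (0 : ℝ) < (d1 : ℝ) + d2 := by positivity
  have hp2 : (0 : ℝ) < (d1 : ℝ) + d2 + d3 := by positivity
  have heq : V (d1 + d2 + d3) - V (d1 + d2) =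
      (d1 : ℝ) ^ 2 * d3 * Δ ^ 2 / (((d1 : ℝ) + d2) * ((d1 : ℝ) + d2 + d3)) := by
    rw [h1, h2]
    have h3 : (d1 : ℝ) + ((d2 : ℝ) + d3) = (d1 : ℝ) + d2 + d3 := by ring
    rw [h3]
    field_simp
    ring
  refine ⟨heq, ?_⟩
  rw [heq]
  positivity
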